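/- For every d ≥ 0 there exists a simplicial complex Δ with convex threshold dimension ctd(Δ) ≥ d; for instance, the d-fold join of the graph 2K_2 (two disjoint edges) with itself has convex threshold dimension at least d. -/

import Mathlib

open scoped Pointwise

/-- `Δ` is realizable as a Minkowski complex in dimension `d` by convex bodies
containing `0`. -/
def MinkowskiRealizable {α : Type*} [Fintype α] (d : ℕ) (Δ : Set (Finset α)) : Prop :=
  ∃ (P : α → Set (Fin d → ℝ)) (μ : Fin d → ℝ),
    (∀ i, Convex ℝ (P i)) ∧ (∀ i, IsCompact (P i)) ∧ (∀ i, (0 : Fin d → ℝ) ∈ P i) ∧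
    ∀ σ : Finset α, σ ∈ Δ ↔ μ ∉ ∑ i ∈ σ, P i

/-- The convex threshold dimension. -/
noncomputable def ctd {α : Type*} [Fintype α] (Δ : Set (Finset α)) : ℕ :=
  sInf {d | MinkowskiRealizable d Δ}

namespace CtdAux


open Finset

section Sets

variable {E : Type*} [NormedAddCommGroup E] [NormedSpace ℝ E] {α : Type*}

lemma zero_mem_sum (σ : Finset α) (P : α → Set E) (h : ∀ i, (0 : E) ∈ P i) :
    (0 : E) ∈ ∑ i ∈ σ, P i := by
  classical
  refine Finset.sum_induction P (fun T => (0 : E) ∈ T) (fun a b ha hb => ?_) ?_ (fun i _ => h i)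
  · simpa using Set.add_mem_add ha hb
  · rw [← Set.singleton_zero]; exact Set.mem_singleton 0

lemma convex_sum (σ : Finset α) (P : α → Set E) (h : ∀ i, Convex ℝ (P i)) :
    Convex ℝ (∑ i ∈ σ, P i) := by
  classical
  refine Finset.sum_induction P (fun T => Convex ℝ T) (fun a b ha hb => ha.add hb) ?_
    (fun i _ => h i)
  rw [← Set.singleton_zero]; exact convex_singleton 0

lemma compact_sum (σ : Finset α) (P : α → Set E) (h : ∀ i, IsCompact (P i)) :
    IsCompact (∑ i ∈ σ, P i) := by
  classical
  refine Finset.sum_induction P (fun T => IsCompact T) (fun a b ha hb => ha.add hb) ?_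
    (fun i _ => h i)
  rw [← Set.singleton_zero]; exact isCompact_singleton

lemma mem_sum_of_subset [DecidableEq α] {σ τ : Finset α} (hsub : τ ⊆ σ) (P : α → Set E)
    (h0 : ∀ i, (0 : E) ∈ P i) {x : E} (hx : x ∈ ∑ i ∈ τ, P i) : x ∈ ∑ i ∈ σ, P i := by
  have hs := Finset.sum_sdiff (f := P) hsub
  rw [← hs]
  simpa using Set.add_mem_add (zero_mem_sum (σ \ τ) P h0) hx

end Sets

section Dot

variable {ι : Type*} [Fintype ι]

/-- A bilinear pairing on `ι → ℝ`. -/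
def dot (y x : ι → ℝ) : ℝ := ∑ i, y i * x i

lemma dot_comm (y x : ι → ℝ) : dot y x = dot x y :=
  Finset.sum_congr rfl fun i _ => mul_comm _ _

lemma dot_add_right (y x x' : ι → ℝ) : dot y (x + x') = dot y x + dot y x' := by
  simp [dot, Pi.add_apply, mul_add, Finset.sum_add_distrib]

lemma dot_add_left (y y' x : ι → ℝ) : dot (y + y') x = dot y x + dot y' x := by
  simp [dot, Pi.add_apply, add_mul, Finset.sum_add_distrib]

lemma dot_sub_left (y y' x : ι → ℝ) : dot (y - y') x = dot y x - dot y' x := by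
  simp [dot, Pi.sub_apply, sub_mul, Finset.sum_sub_distrib]

lemma dot_smul_left (c : ℝ) (y x : ι → ℝ) : dot (c • y) x = c * dot y x := by
  simp [dot, Finset.mul_sum, mul_assoc]

lemma dot_sum_left {κ : Type*} (s : Finset κ) (z : κ → ι → ℝ) (x : ι → ℝ) :
    dot (∑ k ∈ s, z k) x = ∑ k ∈ s, dot (z k) x := by
  simp only [dot, Finset.sum_apply, Finset.sum_mul]
  exact Finset.sum_comm

lemma dot_zero_right (y : ι → ℝ) : dot y 0 = 0 := by simp [dot]

lemma abs_dot_le (y x : ι → ℝ) : |dot y x| ≤ (Fintype.card ι : ℝ) * (‖y‖ * ‖x‖) := by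
  calc |dot y x| ≤ ∑ i, |y i * x i| := Finset.abs_sum_le_sum_abs _ _
    _ ≤ ∑ _i : ι, ‖y‖ * ‖x‖ := by
        refine Finset.sum_le_sum fun i _ => ?_
        rw [abs_mul]
        have h1 : |y i| ≤ ‖y‖ := by
          simpa [Real.norm_eq_abs] using norm_le_pi_norm y i
        have h2 : |x i| ≤ ‖x‖ := by
          simpa [Real.norm_eq_abs] using norm_le_pi_norm x i
        exact mul_le_mul h1 h2 (abs_nonneg _) (norm_nonneg _)
    _ = (Fintype.card ι : ℝ) * (‖y‖ * ‖x‖) := by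
        simp [Finset.sum_const, nsmul_eq_mul]

/-- Vector representation of a continuous linear functional. -/
lemma clm_eq_dot [DecidableEq ι] (f : (ι → ℝ) →L[ℝ] ℝ) : ∃ z : ι → ℝ, ∀ x, f x = dot z x := by
  refine ⟨fun i => f (fun j => if i = j then 1 else 0), fun x => ?_⟩
  conv_lhs => rw [pi_eq_sum_univ x]
  rw [map_sum]
  simp only [map_smul, smul_eq_mul]
  exact Finset.sum_congr rfl fun i _ => mul_comm _ _

end Dot


open Finset

section Sep

variable {ι : Type*} [Fintype ι]

/-- The open convex cone of directions strictly separating `μ` from the compact set `S`. -/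
def sep (S : Set (ι → ℝ)) (μ : ι → ℝ) : Set (ι → ℝ) := {y | ∀ x ∈ S, dot y x < dot y μ}

lemma convex_sep (S : Set (ι → ℝ)) (μ : ι → ℝ) : Convex ℝ (sep S μ) := by
  intro y1 h1 y2 h2 a b ha hb hab
  intro x hx
  have e1 := h1 x hx
  have e2 := h2 x hx
  rw [dot_add_left, dot_add_left, dot_smul_left, dot_smul_left, dot_smul_left, dot_smul_left]
  rcases eq_or_lt_of_le ha with h | h
  · have hb1 : b = 1 := by linarith
    rw [← h, hb1]; simpa using e2
  · have t1 : a * dot y1 x < a * dot y1 μ := by nlinarith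
    have t2 : b * dot y2 x ≤ b * dot y2 μ := by nlinarith
    linarith

lemma cone_sep {S : Set (ι → ℝ)} {μ : ι → ℝ} {y : ι → ℝ} (hy : y ∈ sep S μ) {c : ℝ}
    (hc : 0 < c) : c • y ∈ sep S μ := by
  intro x hx
  rw [dot_smul_left, dot_smul_left]
  exact mul_lt_mul_of_pos_left (hy x hx) hc

lemma isOpen_sep {S : Set (ι → ℝ)} (hS : IsCompact S) (μ : ι → ℝ) : IsOpen (sep S μ) := by
  rcases S.eq_empty_or_nonempty with rfl | hne
  · have : sep (∅ : Set (ι → ℝ)) μ = Set.univ := by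
      ext y; simp [sep]
    rw [this]; exact isOpen_univ
  rw [Metric.isOpen_iff]
  intro y0 hy0
  have hcont : Continuous fun x : ι → ℝ => dot y0 μ - dot y0 x := by
    refine Continuous.sub continuous_const ?_
    unfold dot
    exact continuous_finset_sum _ fun i _ => continuous_const.mul (continuous_apply i)
  obtain ⟨x0, hx0S, hmin⟩ := hS.exists_isMinOn hne hcont.continuousOn
  set ε := dot y0 μ - dot y0 x0 with hεdef
  have hε : 0 < ε := sub_pos.mpr (hy0 x0 hx0S)
  obtain ⟨R, hR⟩ := isBounded_iff_forall_norm_le.mp hS.isBounded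
  have hR0 : 0 ≤ R := le_trans (norm_nonneg x0) (hR x0 hx0S)
  have hN0 : (0:ℝ) ≤ (Fintype.card ι : ℝ) := Nat.cast_nonneg _
  set C : ℝ := (Fintype.card ι : ℝ) * (R + ‖μ‖) + 1 with hCdef
  have hC1 : 0 ≤ C - 1 := by
    have : (0:ℝ) ≤ (Fintype.card ι : ℝ) * (R + ‖μ‖) := by positivity
    simp [hCdef]; linarith
  have hC : 0 < C := by linarith
  refine ⟨ε / C, by positivity, ?_⟩
  intro y hy
  rw [Metric.mem_ball, dist_eq_norm] at hy
  intro x hxS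
  have hA : ε ≤ dot y0 μ - dot y0 x := hmin hxS
  have h1 := abs_le.mp (abs_dot_le (y - y0) μ)
  have h2 := abs_le.mp (abs_dot_le (y - y0) x)
  have hxR := hR x hxS
  set t := ‖y - y0‖ with htdef
  have ht0 : 0 ≤ t := norm_nonneg _
  have e1 : dot y μ = dot y0 μ + dot (y - y0) μ := by rw [dot_sub_left]; ring
  have e2 : dot y x = dot y0 x + dot (y - y0) x := by rw [dot_sub_left]; ring
  have hbound : (Fintype.card ι : ℝ) * (t * ‖x‖) ≤ (Fintype.card ι : ℝ) * (t * R) := by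
    have := mul_le_mul_of_nonneg_left hxR ht0
    nlinarith
  have key : (Fintype.card ι : ℝ) * (t * ‖μ‖) + (Fintype.card ι : ℝ) * (t * R) = t * (C - 1) := by
    simp [hCdef]; ring
  have hkey2 : t * (C - 1) < ε := by
    have h3 : t * (C - 1) ≤ (ε / C) * (C - 1) := mul_le_mul_of_nonneg_right (le_of_lt hy) hC1
    have h4 : (ε / C) * C = ε := div_mul_cancel₀ ε (ne_of_gt hC)
    have h5 : 0 < ε / C := by positivity
    nlinarith
  have goal : dot y0 μ - dot y0 x + dot (y - y0) μ - dot (y - y0) x > 0 := by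
    nlinarith [h1.1, h2.2]
  linarith [goal, e1, e2]

/-- Separation of two disjoint nonempty open convex cones by a strict linear functional. -/
lemma cone_separation [DecidableEq ι] {Ω₁ Ω₂ : Set (ι → ℝ)} (h₁o : IsOpen Ω₁) (h₂o : IsOpen Ω₂)
    (h₁c : Convex ℝ Ω₁) (h₂c : Convex ℝ Ω₂)
    (hcone₁ : ∀ y ∈ Ω₁, ∀ c : ℝ, 0 < c → c • y ∈ Ω₁)
    (hcone₂ : ∀ y ∈ Ω₂, ∀ c : ℝ, 0 < c → c • y ∈ Ω₂)
    (hdisj : ∀ y, y ∈ Ω₁ → y ∈ Ω₂ → False)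
    (hne₁ : Ω₁.Nonempty) (hne₂ : Ω₂.Nonempty) :
    ∃ z : ι → ℝ, (∀ y ∈ Ω₁, dot y z < 0) ∧ (∀ y ∈ Ω₂, 0 < dot y z) := by
  obtain ⟨f, u, hfs, hft⟩ := geometric_hahn_banach_open h₁c h₁o h₂c
    (Set.disjoint_left.mpr fun y h1 h2 => hdisj y h1 h2)
  obtain ⟨a0, ha0⟩ := hne₁
  obtain ⟨b0, hb0⟩ := hne₂
  -- f ≤ 0 on Ω₁
  have hneg : ∀ a ∈ Ω₁, f a ≤ 0 := by
    intro a ha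
    by_contra hpos
    push_neg at hpos
    have hc : 0 < (|u| + 1) / f a := by positivity
    have := hfs _ (hcone₁ a ha _ hc)
    rw [map_smul, smul_eq_mul, div_mul_cancel₀ _ (ne_of_gt hpos)] at this
    have := le_abs_self u
    linarith
  -- 0 ≤ u
  have hu1 : 0 ≤ u := by
    by_contra hu
    push_neg at hu
    have hfa : f a0 < u := hfs a0 ha0
    have hfaneg : f a0 < 0 := lt_trans hfa hu
    have hc : 0 < u / (2 * f a0) := div_pos_iff.mpr (Or.inr ⟨hu, by linarith⟩)
    have h := hfs _ (hcone₁ a0 ha0 _ hc)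
    rw [map_smul, smul_eq_mul] at h
    have : u / (2 * f a0) * f a0 = u / 2 := by
      rw [div_mul_eq_mul_div, mul_div_mul_right _ _ (ne_of_lt hfaneg)]
    rw [this] at h
    linarith
  -- u ≤ 0
  have hu2 : u ≤ 0 := by
    by_contra hu
    push_neg at hu
    have hfb : u ≤ f b0 := hft b0 hb0
    have hfbpos : 0 < f b0 := lt_of_lt_of_le hu hfb
    have hc : 0 < u / (2 * f b0) := by positivity
    have h := hft _ (hcone₂ b0 hb0 _ hc)
    rw [map_smul, smul_eq_mul] at h
    have : u / (2 * f b0) * f b0 = u / 2 := by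
      rw [div_mul_eq_mul_div, mul_div_mul_right _ _ (ne_of_gt hfbpos)]
    rw [this] at h
    linarith
  have hu0 : u = 0 := le_antisymm hu2 hu1
  subst hu0
  -- strict negativity on Ω₁
  have hstrict1 : ∀ a ∈ Ω₁, f a < 0 := fun a ha => hfs a ha
  -- strict positivity on Ω₂
  have hstrict2 : ∀ b ∈ Ω₂, 0 < f b := by
    intro b hb
    rcases lt_or_eq_of_le (hft b hb) with h | h
    · exact h
    exfalso
    have hfa0 : f a0 < 0 := hstrict1 a0 ha0
    have ha0ne : a0 ≠ 0 := by
      intro hz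
      rw [hz, map_zero] at hfa0
      exact lt_irrefl _ hfa0
    obtain ⟨δ, hδ, hball⟩ := Metric.isOpen_iff.mp h₂o b hb
    have hna : 0 < ‖a0‖ := norm_pos_iff.mpr ha0ne
    set s : ℝ := δ / (2 * ‖a0‖) with hsdef
    have hs : 0 < s := by positivity
    have hmem : b + s • a0 ∈ Ω₂ := by
      apply hball
      rw [Metric.mem_ball, dist_eq_norm]
      have : b + s • a0 - b = s • a0 := by abel
      rw [this, norm_smul, Real.norm_eq_abs, abs_of_pos hs, hsdef]
      have heq : δ / (2 * ‖a0‖) * ‖a0‖ = δ / 2 := by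
        rw [div_mul_eq_mul_div, mul_comm (2:ℝ) ‖a0‖, mul_comm δ ‖a0‖,
          mul_div_mul_left _ _ (ne_of_gt hna)]
      rw [heq]
      linarith
    have := hft _ hmem
    rw [map_add, map_smul, smul_eq_mul, ← h] at this
    nlinarith
  obtain ⟨z, hz⟩ := clm_eq_dot f
  refine ⟨z, fun y hy => ?_, fun y hy => ?_⟩
  · rw [dot_comm, ← hz]; exact hstrict1 y hy
  · rw [dot_comm, ← hz]; exact hstrict2 y hy

end Sep

open Finset

/-- vertex `r` of block `k` in the `D`-fold join of `2K₂`. -/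
def vert (D : ℕ) (k : Fin D) (r : Fin 4) : Fin (4 * D) :=
  ⟨4 * k.val + r.val, by have h1 := k.isLt; have h2 := r.isLt; omega⟩

/-- The `D`-fold join of `2K₂`: a subset is a face iff within each block it uses only
vertices `{0,1}` or only vertices `{2,3}`. -/
def Delta (D : ℕ) : Set (Finset (Fin (4 * D))) :=
  {σ | ∀ k : ℕ, (∀ v ∈ σ, v.val / 4 = k → v.val % 4 < 2) ∨
      (∀ v ∈ σ, v.val / 4 = k → 2 ≤ v.val % 4)}

/-- The facet of `Delta D` selected by the edge-choice `χ`. -/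
def tau (D : ℕ) (χ : ℕ → Bool) : Finset (Fin (4 * D)) :=
  Finset.univ.filter (fun v => if χ (v.val / 4) = true then v.val % 4 < 2 else 2 ≤ v.val % 4)

lemma mem_tau {D : ℕ} {χ : ℕ → Bool} {v : Fin (4 * D)} :
    v ∈ tau D χ ↔ (if χ (v.val / 4) = true then v.val % 4 < 2 else 2 ≤ v.val % 4) := by
  simp [tau]

lemma mem_Delta_iff {D : ℕ} {σ : Finset (Fin (4 * D))} :
    σ ∈ Delta D ↔ ∃ χ : ℕ → Bool, σ ⊆ tau D χ := by
  classical
  constructor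
  · intro hσ
    refine ⟨fun k => decide (∀ v ∈ σ, v.val / 4 = k → v.val % 4 < 2), fun v hv => ?_⟩
    rw [mem_tau]
    split_ifs with h
    · exact (of_decide_eq_true h) v hv rfl
    · have h' : ¬ (∀ w ∈ σ, w.val / 4 = v.val / 4 → w.val % 4 < 2) := by
        simpa using h
      rcases hσ (v.val / 4) with hL | hR
      · exact absurd hL h'
      · exact hR v hv rfl
  · rintro ⟨χ, hsub⟩ k
    cases hχ : χ k with
    | true =>
        left; intro v hv hk
        have := mem_tau.mp (hsub hv)
        rw [hk, hχ] at this
        simpa using this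
    | false =>
        right; intro v hv hk
        have := mem_tau.mp (hsub hv)
        rw [hk, hχ] at this
        simpa using this

lemma Delta_down (D : ℕ) : ∀ σ ∈ Delta D, ∀ τ, τ ⊆ σ → τ ∈ Delta D := by
  intro σ hσ τ hτ
  obtain ⟨χ, hsub⟩ := mem_Delta_iff.mp hσ
  exact mem_Delta_iff.mpr ⟨χ, hτ.trans hsub⟩

lemma vert_val (D : ℕ) (k : Fin D) (r : Fin 4) : (vert D k r).val = 4 * k.val + r.val := rfl

lemma vert_div (D : ℕ) (k : Fin D) (r : Fin 4) : (vert D k r).val / 4 = k.val := by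
  rw [vert_val]; have := r.isLt; omega

lemma vert_mod (D : ℕ) (k : Fin D) (r : Fin 4) : (vert D k r).val % 4 = r.val := by
  rw [vert_val]; have := r.isLt; omega

lemma vert_ne {D : ℕ} {k : Fin D} {r s : Fin 4} (h : r.val ≠ s.val) :
    vert D k r ≠ vert D k s := by
  intro he
  apply h
  have hv : (vert D k r).val = (vert D k s).val := congrArg Fin.val he
  rw [vert_val, vert_val] at hv
  omega

/-- Extension of an edge-choice on `Fin D` to `ℕ`. -/
def extB (D : ℕ) (χ : Fin D → Bool) : ℕ → Bool :=
  fun m => if hm : m < D then χ ⟨m, hm⟩ else false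

lemma tau_ext {D : ℕ} (χ : ℕ → Bool) :
    tau D χ = tau D (extB D (fun k => χ k.val)) := by
  ext v
  rw [mem_tau, mem_tau]
  have hv : v.val / 4 < D := by have := v.isLt; omega
  simp [extB, hv]

lemma mem_Delta_iff' {D : ℕ} {σ : Finset (Fin (4 * D))} :
    σ ∈ Delta D ↔ ∃ χf : Fin D → Bool, σ ⊆ tau D (extB D χf) := by
  rw [mem_Delta_iff]
  constructor
  · rintro ⟨χ, h⟩
    exact ⟨fun k => χ k.val, by rwa [← tau_ext]⟩
  · rintro ⟨χf, h⟩
    exact ⟨extB D χf, h⟩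


section Box

variable {ι : Type*}

/-- An axis-parallel box with lower corner `0`. -/
def Box (b : ι → ℝ) : Set (ι → ℝ) := {x | ∀ j, x j ∈ Set.Icc 0 (b j)}

lemma Box_add (b b' : ι → ℝ) (hb : ∀ j, 0 ≤ b j) (hb' : ∀ j, 0 ≤ b' j) :
    Box b + Box b' = Box (b + b') := by
  ext x
  rw [Set.mem_add]
  constructor
  · rintro ⟨p, hp, q, hq, rfl⟩
    intro j
    have h1 := hp j
    have h2 := hq j
    rw [Set.mem_Icc] at h1 h2 ⊢
    constructor
    · simpa using add_le_add h1.1 h2.1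
    · simpa using add_le_add h1.2 h2.2
  · intro hx
    refine ⟨fun j => min (x j) (b j), fun j => ?_, fun j => x j - min (x j) (b j), fun j => ?_, ?_⟩
    · have := hx j
      rw [Set.mem_Icc] at this ⊢
      exact ⟨le_min this.1 (hb j), min_le_right _ _⟩
    · have hthis := hx j
      rw [Set.mem_Icc] at hthis
      show (fun j => x j - min (x j) (b j)) j ∈ Set.Icc 0 (b' j)
      rw [Set.mem_Icc]
      dsimp only
      rcases le_total (x j) (b j) with h | h
      · rw [min_eq_left h]
        simpa using hb' j
      · rw [min_eq_right h]
        constructor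
        · linarith
        · have := hthis.2
          simp only [Pi.add_apply] at this
          linarith
    · ext j
      simp

lemma Box_zero [Fintype ι] : Box (0 : ι → ℝ) = (0 : Set (ι → ℝ)) := by
  rw [← Set.singleton_zero]
  ext x
  simp only [Box, Set.mem_setOf_eq, Pi.zero_apply, Set.Icc_self, Set.mem_singleton_iff]
  constructor
  · intro h; funext j; exact h j
  · intro h j; rw [h]; rfl

lemma sum_box {α : Type*} [Fintype ι] (σ : Finset α) (c : α → ι → ℝ)
    (hc : ∀ v j, 0 ≤ c v j) : (∑ v ∈ σ, Box (c v)) = Box (∑ v ∈ σ, c v) := by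
  classical
  induction σ using Finset.induction_on with
  | empty => simp [Box_zero]
  | insert _ _ ha ih =>
      rw [Finset.sum_insert ha, Finset.sum_insert ha, ih, Box_add]
      · exact hc _
      · intro j
        rw [Finset.sum_apply]
        exact Finset.sum_nonneg fun v _ => hc v j

lemma convex_Box (b : ι → ℝ) : Convex ℝ (Box b) := by
  have : Box b = Set.pi Set.univ (fun j => Set.Icc 0 (b j)) := by
    ext x; simp [Box, Set.mem_pi, Set.mem_Icc, Pi.le_def, forall_and]
  rw [this]
  exact convex_pi fun j _ => convex_Icc _ _

lemma compact_Box [Fintype ι] (b : ι → ℝ) : IsCompact (Box b) := by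
  have : Box b = Set.pi Set.univ (fun j => Set.Icc 0 (b j)) := by
    ext x; simp [Box, Set.mem_pi, Set.mem_Icc, Pi.le_def, forall_and]
  rw [this]
  exact isCompact_univ_pi fun j => isCompact_Icc

lemma zero_mem_Box {b : ι → ℝ} (hb : ∀ j, 0 ≤ b j) : (0 : ι → ℝ) ∈ Box b :=
  fun j => Set.mem_Icc.mpr ⟨le_refl _, hb j⟩

end Box

lemma upper_bound (D : ℕ) : MinkowskiRealizable (2 ^ D) (Delta D) := by
  classical
  have hcard : Fintype.card (Fin D → Bool) = 2 ^ D := by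
    simp [Fintype.card_fun]
  let B : Fin (2 ^ D) ≃ (Fin D → Bool) := (Fintype.equivFinOfCardEq hcard).symm
  set c : Fin (4 * D) → Fin (2 ^ D) → ℝ :=
    fun v j => if v ∈ tau D (extB D (B j)) then 0 else 1 with hcdef
  have hc0 : ∀ v j, 0 ≤ c v j := by
    intro v j
    by_cases h : v ∈ tau D (extB D (B j)) <;> simp [hcdef, h]
  refine ⟨fun v => Box (c v), fun _ => 1, fun v => convex_Box _, fun v => compact_Box _,
    fun v => zero_mem_Box (hc0 v), ?_⟩
  intro σ
  rw [sum_box σ c hc0]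
  have key : ((fun _ => 1 : Fin (2 ^ D) → ℝ) ∈ Box (∑ v ∈ σ, c v)) ↔
      ∀ j, ¬ σ ⊆ tau D (extB D (B j)) := by
    constructor
    · intro hmem j hsub
      have := hmem j
      rw [Set.mem_Icc, Finset.sum_apply] at this
      have hz : (∑ v ∈ σ, c v j) = 0 := Finset.sum_eq_zero fun v hv => by
        simp [hcdef, hsub hv]
      rw [hz] at this
      have h2 := this.2
      norm_num at h2
    · intro h j
      rw [Set.mem_Icc, Finset.sum_apply]
      obtain ⟨v, hv, hvn⟩ := Finset.not_subset.mp (h j)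
      have h1 : c v j = 1 := by simp [hcdef, hvn]
      have : (1:ℝ) ≤ ∑ v ∈ σ, c v j := by
        rw [← h1]
        exact Finset.single_le_sum (fun w _ => hc0 w j) hv
      exact ⟨by norm_num, this⟩
  constructor
  · intro hσ hmem
    obtain ⟨χf, hsub⟩ := mem_Delta_iff'.mp hσ
    have := key.mp hmem (B.symm χf)
    rw [Equiv.apply_symm_apply] at this
    exact this hsub
  · intro hmem
    rcases Classical.em (∀ j, ¬ σ ⊆ tau D (extB D (B j))) with h | h
    · exact absurd (key.mpr h) hmem
    · push_neg at h
      obtain ⟨j, hj⟩ := h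
      exact mem_Delta_iff'.mpr ⟨B j, hj⟩


lemma lower_bound (D e : ℕ) (h : MinkowskiRealizable e (Delta D)) : D ≤ e := by
  classical
  obtain ⟨P, μ, hconv, hcomp, h0, hiff⟩ := h
  have cross : ∀ (k : Fin D) (r s : Fin 4), r.val < 2 → 2 ≤ s.val →
      μ ∈ P (vert D k r) + P (vert D k s) := by
    intro k r s hr hs
    have hrs : r.val ≠ s.val := by omega
    have hne : vert D k r ≠ vert D k s := vert_ne hrs
    have hmem : μ ∈ ∑ i ∈ ({vert D k r, vert D k s} : Finset (Fin (4 * D))), P i := by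
      by_contra hmu
      have hD : ({vert D k r, vert D k s} : Finset (Fin (4 * D))) ∈ Delta D := (hiff _).mpr hmu
      rcases hD k.val with hL | hR
      · have := hL (vert D k s) (by simp) (vert_div D k s)
        rw [vert_mod] at this
        omega
      · have := hR (vert D k r) (by simp) (vert_div D k r)
        rw [vert_mod] at this
        omega
    rwa [Finset.sum_pair hne] at hmem
  set S : Fin D → Bool → Set (Fin e → ℝ) := fun k b =>
    if b then P (vert D k 0) + P (vert D k 1) else P (vert D k 2) + P (vert D k 3) with hSdef
  set Om : Fin D → Bool → Set (Fin e → ℝ) := fun k b => sep (S k b) μ with hOmdef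
  have hScompact : ∀ k b, IsCompact (S k b) := by
    intro k b
    cases b <;> simp only [hSdef, if_true, if_false, Bool.false_eq_true] <;>
      exact (hcomp _).add (hcomp _)
  have exists_y : ∀ χ : Fin D → Bool, ∃ y, ∀ k, y ∈ Om k (χ k) := by
    intro χ
    set χ' : ℕ → Bool := fun m => if hm : m < D then χ ⟨m, hm⟩ else true with hχ'
    have hface : tau D χ' ∈ Delta D := mem_Delta_iff.mpr ⟨χ', Finset.Subset.refl _⟩
    have hμ : μ ∉ ∑ v ∈ tau D χ', P v := (hiff _).mp hface
    have hconvS : Convex ℝ (∑ v ∈ tau D χ', P v) := convex_sum _ _ hconv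
    have hcompS : IsCompact (∑ v ∈ tau D χ', P v) := compact_sum _ _ hcomp
    obtain ⟨f, u, hfa, hfμ⟩ := geometric_hahn_banach_closed_point hconvS hcompS.isClosed hμ
    obtain ⟨z, hz⟩ := clm_eq_dot f
    refine ⟨z, fun k => ?_⟩
    intro x hx
    have hsub : ∀ r : Fin 4, ((χ k = true ∧ r.val < 2) ∨ (χ k = false ∧ 2 ≤ r.val)) →
        vert D k r ∈ tau D χ' := by
      intro r hcase
      rw [mem_tau, vert_div, vert_mod]
      have hk : χ' k.val = χ k := by
        rw [hχ']
        simp [k.isLt]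
      rcases hcase with ⟨h1, h2⟩ | ⟨h1, h2⟩ <;> rw [hk, h1] <;> simp [h2]
    have key : ∀ (r s : Fin 4), r.val ≠ s.val → vert D k r ∈ tau D χ' →
        vert D k s ∈ tau D χ' → x ∈ P (vert D k r) + P (vert D k s) →
        x ∈ ∑ v ∈ tau D χ', P v := by
      intro r s hrs hr hs hx2
      have hpair : ({vert D k r, vert D k s} : Finset (Fin (4 * D))) ⊆ tau D χ' := by
        intro v hv
        rcases Finset.mem_insert.mp hv with rfl | hv
        · exact hr
        · rw [Finset.mem_singleton.mp hv]; exact hs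
      refine mem_sum_of_subset hpair P h0 ?_
      rwa [Finset.sum_pair (vert_ne hrs)]
    have hx' : x ∈ ∑ v ∈ tau D χ', P v := by
      rcases hb : χ k with _ | _
      · refine key 2 3 (by decide) (hsub 2 (Or.inr ⟨hb, by decide⟩))
          (hsub 3 (Or.inr ⟨hb, by decide⟩)) ?_
        have hSe : S k (χ k) = P (vert D k 2) + P (vert D k 3) := by
          rw [hb]; simp [hSdef]
        rwa [hSe] at hx
      · refine key 0 1 (by decide) (hsub 0 (Or.inl ⟨hb, by decide⟩))
          (hsub 1 (Or.inl ⟨hb, by decide⟩)) ?_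
        have hSe : S k (χ k) = P (vert D k 0) + P (vert D k 1) := by
          rw [hb]; simp [hSdef]
        rwa [hSe] at hx
    calc dot z x = f x := (hz x).symm
      _ < u := hfa x hx'
      _ < f μ := hfμ
      _ = dot z μ := hz μ
  have hOmopen : ∀ k b, IsOpen (Om k b) := fun k b => isOpen_sep (hScompact k b) μ
  have hOmconvex : ∀ k b, Convex ℝ (Om k b) := fun k b => convex_sep _ _
  have hOmcone : ∀ k b, ∀ y ∈ Om k b, ∀ c : ℝ, 0 < c → c • y ∈ Om k b :=
    fun k b y hy c hc => cone_sep hy hc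
  have hOmne : ∀ (b : Bool) (k : Fin D), (Om k b).Nonempty := by
    intro b k
    obtain ⟨y, hy⟩ := exists_y (fun _ => b)
    exact ⟨y, hy k⟩
  have hOmdisj : ∀ (k : Fin D) (y : Fin e → ℝ), y ∈ Om k true → y ∈ Om k false → False := by
    intro k y h1 h2
    obtain ⟨xa, hxa, xc, hxc, hac⟩ := Set.mem_add.mp (cross k 0 2 (by decide) (by decide))
    obtain ⟨xb, hxb, xd, hxd, hbd⟩ := Set.mem_add.mp (cross k 1 3 (by decide) (by decide))
    have hm1 : xa + xb ∈ S k true := by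
      simp only [hSdef, if_true]
      exact Set.add_mem_add hxa hxb
    have hm2 : xc + xd ∈ S k false := by
      simp only [hSdef, if_false, Bool.false_eq_true]
      exact Set.add_mem_add hxc hxd
    have e1 : dot y (xa + xb) < dot y μ := h1 _ hm1
    have e2 : dot y (xc + xd) < dot y μ := h2 _ hm2
    have s1 : dot y xa + dot y xc = dot y μ := by rw [← dot_add_right, hac]
    have s2 : dot y xb + dot y xd = dot y μ := by rw [← dot_add_right, hbd]
    rw [dot_add_right] at e1 e2
    linarith
  have hsep : ∀ k : Fin D, ∃ z : Fin e → ℝ,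
      (∀ y ∈ Om k true, dot y z < 0) ∧ (∀ y ∈ Om k false, 0 < dot y z) := by
    intro k
    exact cone_separation (hOmopen k true) (hOmopen k false) (hOmconvex k true)
      (hOmconvex k false) (hOmcone k true) (hOmcone k false) (hOmdisj k)
      (hOmne true k) (hOmne false k)
  choose w hw1 hw2 using hsep
  have hli : LinearIndependent ℝ w := by
    rw [Fintype.linearIndependent_iff]
    intro g hg i
    by_contra hgi
    obtain ⟨y, hy⟩ := exists_y (fun k => decide (g k < 0))
    have hterm : ∀ k, 0 ≤ g k * dot y (w k) := by
      intro k
      rcases lt_trichotomy (g k) 0 with hk | hk | hk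
      · have hYk : y ∈ Om k true := by
          have hb : (decide (g k < 0)) = true := by simp [hk]
          have := hy k
          rwa [hb] at this
        have := hw1 k y hYk
        nlinarith
      · rw [hk]; simp
      · have hYk : y ∈ Om k false := by
          have hb : (decide (g k < 0)) = false := by simp [not_lt.mpr hk.le]
          have := hy k
          rwa [hb] at this
        have := hw2 k y hYk
        nlinarith
    have hstrict : 0 < g i * dot y (w i) := by
      rcases lt_trichotomy (g i) 0 with hk | hk | hk
      · have hYk : y ∈ Om i true := by
          have hb : (decide (g i < 0)) = true := by simp [hk]
          have := hy i
          rwa [hb] at this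
        have := hw1 i y hYk
        nlinarith
      · exact absurd hk hgi
      · have hYk : y ∈ Om i false := by
          have hb : (decide (g i < 0)) = false := by simp [not_lt.mpr hk.le]
          have := hy i
          rwa [hb] at this
        have := hw2 i y hYk
        nlinarith
    have hzero : dot y (∑ k, g k • w k) = ∑ k, g k * dot y (w k) := by
      rw [dot_comm, dot_sum_left]
      exact Finset.sum_congr rfl fun k _ => by rw [dot_smul_left, dot_comm]
    rw [hg, dot_zero_right] at hzero
    have hpos : (0:ℝ) < ∑ k, g k * dot y (w k) :=
      Finset.sum_pos' (fun k _ => hterm k) ⟨i, Finset.mem_univ i, hstrict⟩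
    rw [← hzero] at hpos
    exact lt_irrefl _ hpos
  have hcard := hli.fintype_card_le_finrank
  simpa [Module.finrank_pi] using hcard

end CtdAux

/-- for every d ≥ 0 there is a simplicial complex whose convex
threshold dimension is at least d. -/
theorem ctd_unbounded (d : ℕ) :
    ∃ (n : ℕ) (Δ : Set (Finset (Fin n))),
      (∀ σ ∈ Δ, ∀ τ, τ ⊆ σ → τ ∈ Δ) ∧ d ≤ ctd Δ := by
  refine ⟨4 * d, CtdAux.Delta d, CtdAux.Delta_down d, ?_⟩
  have hne : MinkowskiRealizable (2 ^ d) (CtdAux.Delta d) := CtdAux.upper_bound d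
  have hmem := Nat.sInf_mem (s := {e | MinkowskiRealizable e (CtdAux.Delta d)}) ⟨2 ^ d, hne⟩
  exact CtdAux.lower_bound d _ hmem
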